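/- Let a finite monoid V act on an additive commutative monoid H, with the insertion property, where H is aperiodic, and suppose the path identity and the fall-apart identity hold. If v, u : V are such that v * (u * w) = v for some w : V, then v • (g + u • 0) = v • g for all g : H (i.e. v = v(1 + u0)). -/
import Mathlib

/-- In a finite monoid, some positive power of every element is idempotent. -/
lemma exists_idem_pow {M : Type*} [Monoid M] [Finite M] (a : M) :
    ∃ n : ℕ, 1 ≤ n ∧ a ^ n * a ^ n = a ^ n := by
  have hninj : ¬ Function.Injective (fun n : ℕ => a ^ n) := by
    intro h
    have := Finite.of_injective _ h
    exact not_finite ℕ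
  rw [Function.not_injective_iff] at hninj
  obtain ⟨i, j, hij, hne⟩ := hninj
  -- wlog i < j
  obtain ⟨i, p, hp1, hstep⟩ : ∃ i p : ℕ, 1 ≤ p ∧ a ^ (i + p) = a ^ i := by
    rcases lt_or_gt_of_ne hne with h | h
    · exact ⟨i, j - i, by omega, by rw [show i + (j - i) = j by omega]; exact hij.symm⟩
    · exact ⟨j, i - j, by omega, by rw [show j + (i - j) = i by omega]; exact hij⟩
  have hper : ∀ m c : ℕ, a ^ (i + c * p + m) = a ^ (i + m) := by
    intro m c
    induction c with
    | zero => simp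
    | succ c ih =>
        have : i + (c + 1) * p + m = (i + p) + (c * p + m) := by ring
        rw [this, pow_add, hstep, ← pow_add, show i + (c * p + m) = i + c * p + m by ring, ih]
  have hge : i + 1 ≤ (i + 1) * p := Nat.le_mul_of_pos_right _ hp1
  set n := (i + 1) * p with hn
  refine ⟨n, by omega, ?_⟩
  rw [← pow_add]
  calc a ^ (n + n)
      = a ^ (i + (i + 1) * p + (n - i)) := by rw [← hn]; congr 1; omega
    _ = a ^ (i + (n - i)) := hper _ _
    _ = a ^ n := by congr 1; omega

/-- Stabilization lemma for path algebras: if `vu ∼ v` (i.e. `v * u * w = v`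
for some `w`), then `v = v(1 + u0)`, i.e. `v • (g + u • 0) = v • g` for all
`g`. -/
theorem stab_lemma {V H : Type*} [Monoid V] [Finite V] [AddCommMonoid H]
    [MulAction V H]
    (ins : ∀ h : H, ∃ c : V, ∀ g : H, c • g = g + h)
    (aper : ∃ k : ℕ, 1 ≤ k ∧ ∀ h : H, (k + 1) • h = k • h)
    (path : ∀ (v : V) (g h : H), v • g + v • h = v • (g + h) + v • (0 : H))
    (fall : ∀ u : V, u * u = u → ∀ g h : H, u • (g + h) = u • (g + u • h))
    (v u : V) (hw : ∃ w : V, v * (u * w) = v) :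
    ∀ g : H, v • (g + u • (0 : H)) = v • g := by
  obtain ⟨k, hk1, hk⟩ := aper
  obtain ⟨w, hvw⟩ := hw
  set m : V := u * w with hm
  obtain ⟨N, hN1, hNe⟩ := exists_idem_pow m
  set e : V := m ^ N with he
  set s : V := w * m ^ (N - 1) with hs
  have heus : e = u * s := by
    have hNs : m ^ N = m * m ^ (N - 1) := by
      conv_lhs => rw [show N = (N - 1) + 1 by omega, pow_succ']
    rw [he, hNs, hm, hs, mul_assoc]
  have hvm : ∀ n : ℕ, v * m ^ n = v := by
    intro n
    induction n with
    | zero => simp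
    | succ n ih => rw [pow_succ, ← mul_assoc, ih, hm, hvw]
  have hve : v * e = v := hvm N
  -- adding e • 0 inside v • is free
  have key : ∀ x : H, v • (x + e • (0 : H)) = v • x := by
    intro x
    have h1 : e • x = e • (x + e • (0 : H)) := by
      conv_lhs => rw [← add_zero x, fall e hNe x 0]
    calc v • (x + e • (0 : H)) = (v * e) • (x + e • (0 : H)) := by rw [hve]
      _ = v • (e • (x + e • (0 : H))) := mul_smul _ _ _
      _ = v • (e • x) := by rw [← h1]
      _ = (v * e) • x := (mul_smul _ _ _).symm
      _ = v • x := by rw [hve]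
  have keyj : ∀ (j : ℕ) (x : H), v • (x + j • (e • (0 : H))) = v • x := by
    intro j
    induction j with
    | zero => simp
    | succ j ih =>
        intro x
        rw [succ_nsmul, ← add_assoc, key, ih]
  -- decomposition of j+1 copies of e • 0
  have he0 : e • (0 : H) = u • (s • (0 : H)) := by rw [heus, mul_smul]
  have decomp : ∀ j : ℕ,
      (j + 1) • (e • (0 : H)) = u • ((j + 1) • (s • (0 : H))) + j • (u • (0 : H)) := by
    intro j
    induction j with
    | zero => simp [he0]
    | succ j ih =>
        calc (j + 1 + 1) • (e • (0 : H))
            = (j + 1) • (e • (0 : H)) + e • (0 : H) := succ_nsmul _ _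
          _ = u • ((j + 1) • (s • (0 : H))) + j • (u • (0 : H)) + u • (s • (0 : H)) := by
              rw [ih, he0]
          _ = (u • ((j + 1) • (s • (0 : H))) + u • (s • (0 : H))) + j • (u • (0 : H)) := by
              abel
          _ = (u • ((j + 1) • (s • (0 : H)) + s • (0 : H)) + u • (0 : H)) + j • (u • (0 : H)) := by
              rw [path u]
          _ = u • ((j + 1 + 1) • (s • (0 : H))) + (j + 1) • (u • (0 : H)) := by
              rw [← succ_nsmul, succ_nsmul (u • (0 : H)) j]; abel
  intro g
  set t : H := u • (0 : H) with ht
  set X : H := u • ((k + 1) • (s • (0 : H))) with hX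
  have h1 : v • g = v • (g + (X + k • t)) := by
    rw [← decomp k, keyj]
  have h2 : v • (g + t) = v • ((g + t) + (X + k • t)) := by
    rw [← decomp k, keyj]
  have hH : (g + t) + (X + k • t) = g + (X + k • t) := by
    conv_rhs => rw [← hk t]
    rw [succ_nsmul]
    abel
  rw [h2, hH, ← h1]
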